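/- arXiv:1504.06317 — 3 statements merged into one kernel-verified Lean document; each statement's English description precedes it below -/
import Mathlib

section
/- For real q with 0 < q < 1 and u ∈ 1/6 + (1/3)ℤ, one has θ₂(u, q^{1/2}) = (e^{πiu} + e^{-πiu})·q^{1/8}·γ(q), where γ(q) = Σ_{j≥0} (-1)^j q^{3j(3j+1)/2} - (-1)^j q^{(3j+2)(3j+3)/2}. -/
set_option maxHeartbeats 1000000

open Complex

/-- `θ₂(u,q) = Σ_{d ∈ ℤ+1/2} e^{2πiud} q^{d²}` for a real nome `q > 0`, with
`q^{d²} = exp(d² log q)` computed with the real logarithm (`Real.rpow`). -/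
noncomputable def theta2Real (u : ℂ) (q : ℝ) : ℂ :=
  ∑' n : ℤ, Complex.exp (2 * Real.pi * Complex.I * u * ((n : ℂ) + 1 / 2)) *
    ((q ^ (((n : ℝ) + 1 / 2) ^ 2) : ℝ) : ℂ)

/-- `γ(q) = Σ_{j ≥ 0} (-1)^j q^{3j(3j+1)/2} - (-1)^j q^{(3j+2)(3j+3)/2}`
(all exponents are integers). -/
noncomputable def gammaSeries (q : ℝ) : ℂ :=
  ∑' j : ℕ, ((-1 : ℂ) ^ j * (q : ℂ) ^ (3 * j * (3 * j + 1) / 2) -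
    (-1 : ℂ) ^ j * (q : ℂ) ^ ((3 * j + 2) * (3 * j + 3) / 2))

/-- Auxiliary term `A^(2m+1) q^(m(m+1)/2)`. -/
noncomputable def gTerm (A : ℂ) (q : ℝ) (m : ℕ) : ℂ :=
  A ^ (2 * m + 1) * ((q ^ (m * (m + 1) / 2) : ℝ) : ℂ)

lemma le_tri (m : ℕ) : m ≤ m * (m + 1) / 2 := by
  rcases Nat.eq_zero_or_pos m with rfl | hm
  · simp
  rw [Nat.le_div_iff_mul_le (by norm_num)]
  exact Nat.mul_le_mul le_rfl (by omega)

lemma gTerm_summable {q : ℝ} (hq0 : 0 < q) (hq1 : q < 1) {A : ℂ}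
    (hA : ‖A‖ = 1) : Summable (gTerm A q) := by
  apply Summable.of_norm
  apply Summable.of_nonneg_of_le (fun m => norm_nonneg _) (fun m => ?_)
    (summable_geometric_of_lt_one hq0.le hq1)
  have h1 : ‖gTerm A q m‖ = q ^ (m * (m + 1) / 2) := by
    rw [gTerm, norm_mul, norm_pow, hA, one_pow, one_mul,
      Complex.norm_real, Real.norm_eq_abs, _root_.abs_of_nonneg (pow_nonneg hq0.le _)]
  rw [h1]
  exact pow_le_pow_of_le_one hq0.le hq1.le (le_tri m)

/-- For `0 < q < 1` and `u ∈ 1/6 + (1/3)ℤ`,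
`θ₂(u, q^{1/2}) = (e^{πiu} + e^{-πiu}) q^{1/8} γ(q)`. -/
theorem stmt12 (q : ℝ) (hq0 : 0 < q) (hq1 : q < 1) (u : ℂ)
    (hu : ∃ k : ℤ, u = 1 / 6 + (k : ℂ) / 3) :
    theta2Real u (q ^ ((1 : ℝ) / 2)) =
      (Complex.exp (Real.pi * Complex.I * u) + Complex.exp (-(Real.pi * Complex.I * u))) *
        ((q ^ ((1 : ℝ) / 8) : ℝ) : ℂ) * gammaSeries q := by
  obtain ⟨k, rfl⟩ := hu
  set u : ℂ := 1 / 6 + (k : ℂ) / 3 with hu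
  set A : ℂ := Complex.exp (Real.pi * Complex.I * u) with hA
  have hAne : A ≠ 0 := Complex.exp_ne_zero _
  have hB : Complex.exp (-(Real.pi * Complex.I * u)) = A⁻¹ := by
    rw [Complex.exp_neg]
  have hA6 : A ^ 6 = -1 := by
    rw [hA, ← Complex.exp_nat_mul]
    have h : ((6 : ℕ) : ℂ) * (Real.pi * Complex.I * u) =
        Real.pi * Complex.I + (k : ℂ) * (2 * Real.pi * Complex.I) := by
      rw [hu]; push_cast; ring
    rw [h, Complex.exp_add, Complex.exp_pi_mul_I, Complex.exp_int_mul_two_pi_mul_I]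
    ring
  have hAabs : ‖A‖ = 1 := by
    have hre : (Real.pi : ℂ) * Complex.I * u = ((Real.pi * (1/6 + k/3) : ℝ) : ℂ) * Complex.I := by
      rw [hu]; push_cast; ring
    rw [hA, hre, Complex.norm_exp_ofReal_mul_I]
  have h6' : (A⁻¹) ^ 6 = -1 := by rw [inv_pow, hA6]; norm_num
  -- the summand of theta2Real at integer n
  set f : ℤ → ℂ := fun n => Complex.exp (2 * Real.pi * Complex.I * u * ((n : ℂ) + 1 / 2)) *
    (((q ^ ((1:ℝ)/2)) ^ (((n : ℝ) + 1 / 2) ^ 2) : ℝ) : ℂ) with hf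
  -- power-of-q computation
  have hqpow : ∀ x : ℝ, (q ^ ((1:ℝ)/2)) ^ x = q ^ ((1/2 : ℝ) * x) := fun x =>
    (Real.rpow_mul hq0.le _ _).symm
  have hqtri : ∀ m : ℕ, (1/2 : ℝ) * (((m : ℝ) + 1/2) ^ 2) = ((m * (m+1) / 2 : ℕ) : ℝ) + 1/8 := by
    intro m
    have hdvd : 2 ∣ m * (m + 1) := (Nat.even_mul_succ_self m).two_dvd
    rw [Nat.cast_div hdvd (by norm_num)]
    push_cast
    ring
  have hqmain : ∀ m : ℕ, ((q ^ ((1:ℝ)/2)) ^ (((m : ℝ) + 1/2) ^ 2) : ℝ)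
      = q ^ (m * (m+1) / 2) * q ^ ((1:ℝ)/8) := by
    intro m
    rw [hqpow, hqtri, Real.rpow_add hq0, Real.rpow_natCast]
  have hpos : ∀ m : ℕ, f (m : ℤ) = (q ^ ((1:ℝ)/8) : ℝ) * gTerm A q m := by
    intro m
    rw [hf]
    simp only
    have harg : 2 * (Real.pi : ℂ) * Complex.I * u * (((m : ℤ) : ℂ) + 1 / 2)
        = ((2 * m + 1 : ℕ) : ℂ) * (Real.pi * Complex.I * u) := by push_cast; ring
    have hcast : (((m : ℤ) : ℝ) + 1/2) = ((m : ℝ) + 1/2) := by push_cast; ring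
    rw [harg, Complex.exp_nat_mul, ← hA, hcast, hqmain, gTerm]
    push_cast
    ring
  have hneg : ∀ m : ℕ, f (-((m : ℤ) + 1)) = (q ^ ((1:ℝ)/8) : ℝ) * gTerm A⁻¹ q m := by
    intro m
    rw [hf]
    simp only
    have harg : 2 * (Real.pi : ℂ) * Complex.I * u * ((((-((m : ℤ) + 1)) : ℤ) : ℂ) + 1 / 2)
        = ((2 * m + 1 : ℕ) : ℂ) * (-(Real.pi * Complex.I * u)) := by push_cast; ring
    have hcast : ((((-((m : ℤ) + 1)) : ℤ) : ℝ) + 1/2) ^ 2 = ((m : ℝ) + 1/2) ^ 2 := by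
      push_cast; ring
    rw [harg, Complex.exp_nat_mul, Complex.exp_neg, ← hA, hcast, hqmain, gTerm]
    push_cast
    ring
  have hAabs' : ‖A⁻¹‖ = 1 := by rw [norm_inv, hAabs]; norm_num
  have hs1 : Summable (gTerm A q) := gTerm_summable hq0 hq1 hAabs
  have hs2 : Summable (gTerm A⁻¹ q) := gTerm_summable hq0 hq1 hAabs'
  have hsf1 : Summable (fun m : ℕ => f (m : ℤ)) :=
    (hs1.mul_left _).congr fun m => (hpos m).symm
  have hsf2 : Summable (fun m : ℕ => f (-((m : ℤ) + 1))) :=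
    (hs2.mul_left _).congr fun m => (hneg m).symm
  have step1 : theta2Real u (q ^ ((1:ℝ)/2))
      = ((q ^ ((1:ℝ)/8) : ℝ) : ℂ) * (∑' m : ℕ, gTerm A q m) +
        ((q ^ ((1:ℝ)/8) : ℝ) : ℂ) * (∑' m : ℕ, gTerm A⁻¹ q m) := by
    rw [theta2Real]
    rw [show (∑' n : ℤ, Complex.exp (2 * Real.pi * Complex.I * u * ((n : ℂ) + 1 / 2)) *
      (((q ^ ((1:ℝ)/2)) ^ (((n : ℝ) + 1 / 2) ^ 2) : ℝ) : ℂ)) = ∑' n : ℤ, f n from rfl]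
    rw [tsum_of_nat_of_neg_add_one hsf1 hsf2, tsum_congr hpos, tsum_congr hneg,
      tsum_mul_left, tsum_mul_left]
  -- combine the two series
  set h : ℕ → ℂ := fun m => gTerm A q m + gTerm A⁻¹ q m with hh
  have hsh : Summable h := hs1.add hs2
  have hsumh : (∑' m : ℕ, gTerm A q m) + (∑' m : ℕ, gTerm A⁻¹ q m) = ∑' m, h m :=
    (Summable.tsum_add hs1 hs2).symm
  -- reindex mod 3
  have e := Nat.divModEquiv 3
  have hshe : Summable (fun p : ℕ × Fin 3 => h ((Nat.divModEquiv 3).symm p)) :=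
    (Equiv.summable_iff (Nat.divModEquiv 3).symm).mpr hsh
  have step2 : (∑' m, h m) = ∑' j : ℕ, (h (j * 3) + h (j * 3 + 1) + h (j * 3 + 2)) := by
    rw [← (Equiv.tsum_eq (Nat.divModEquiv 3).symm h),
      Summable.tsum_prod' hshe (fun b => Summable.of_finite)]
    congr 1
    funext j
    rw [tsum_fintype]
    simp [Nat.divModEquiv, Fin.sum_univ_three]
  -- per-term identity
  have hper : ∀ j : ℕ, h (j * 3) + h (j * 3 + 1) + h (j * 3 + 2)
      = (A + A⁻¹) * ((-1 : ℂ) ^ j * (q : ℂ) ^ (3 * j * (3 * j + 1) / 2) -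
        (-1 : ℂ) ^ j * (q : ℂ) ^ ((3 * j + 2) * (3 * j + 3) / 2)) := by
    intro j
    have h5 : A ^ 5 = -A⁻¹ := by
      have hh5 : A * -A ^ 5 = 1 := by
        rw [show A * -A ^ 5 = -(A ^ 6) from by ring, hA6]; norm_num
      rw [inv_eq_of_mul_eq_one_right hh5]; ring
    have h5' : A⁻¹ ^ 5 = -A := by
      rw [inv_pow, h5, inv_neg, inv_inv]
    have h3 : A⁻¹ ^ 3 = -A ^ 3 := by
      rw [inv_pow]
      exact inv_eq_of_mul_eq_one_right
        (by rw [show A ^ 3 * -A ^ 3 = -(A ^ 6) from by ring, hA6]; norm_num)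
    have pw : ∀ (C : ℂ) (r : ℕ), C ^ (6 * j + r) = (C ^ 6) ^ j * C ^ r := fun C r => by
      rw [pow_add, pow_mul]
    have exp1 : 2 * (j * 3) + 1 = 6 * j + 1 := by ring
    have exp2 : 2 * (j * 3 + 1) + 1 = 6 * j + 3 := by ring
    have exp3 : 2 * (j * 3 + 2) + 1 = 6 * j + 5 := by ring
    have t1 : (j * 3) * (j * 3 + 1) / 2 = 3 * j * (3 * j + 1) / 2 := by rw [mul_comm j 3]
    have t2 : (j * 3 + 2) * ((j * 3 + 2) + 1) / 2 = (3 * j + 2) * (3 * j + 3) / 2 := by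
      rw [mul_comm j 3]
    simp only [hh, gTerm, exp1, exp2, exp3, t1, t2, pw, hA6, h6', h5, h5', h3]
    push_cast
    ring
  rw [step1, hB, ← mul_add, hsumh, step2, tsum_congr hper, tsum_mul_left, gammaSeries]
  ring
end

section
/- For any η ∈ ℂ[[q]], there exists a unique formal power series β ∈ q + q²·ℂ[[q]] such that η(β(q))·β'(q) - β''(q)/β'(q) = 0 in ℂ[[q]]. -/
open PowerSeries

/-- Formal composition `η ∘ β` of power series (valid when `β` has zero constant term):
the `n`-th coefficient is `Σ_{k ≤ n} η_k · (coeff of qⁿ in βᵏ)`. -/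
noncomputable def compPS (η β : PowerSeries ℂ) : PowerSeries ℂ :=
  PowerSeries.mk fun n =>
    ∑ k ∈ Finset.range (n + 1), PowerSeries.coeff k η * PowerSeries.coeff n (β ^ k)

lemma coeff_pow_congr {β γ : PowerSeries ℂ} (k n : ℕ)
    (h : ∀ i ≤ n, PowerSeries.coeff i β = PowerSeries.coeff i γ) :
    PowerSeries.coeff n (β ^ k) = PowerSeries.coeff n (γ ^ k) := by
  induction k generalizing n with
  | zero => simp
  | succ k ih =>
    rw [pow_succ, pow_succ, PowerSeries.coeff_mul, PowerSeries.coeff_mul]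
    refine Finset.sum_congr rfl fun p hp => ?_
    rw [Finset.HasAntidiagonal.mem_antidiagonal] at hp
    rw [ih p.1 (fun i hi => h i (by omega)), h p.2 (by omega)]

lemma coeff_F_congr (η : PowerSeries ℂ) {β γ : PowerSeries ℂ} (n : ℕ)
    (h : ∀ i ≤ n + 1, PowerSeries.coeff i β = PowerSeries.coeff i γ) :
    PowerSeries.coeff n (compPS η β * (PowerSeries.derivative ℂ β) ^ 2) =
    PowerSeries.coeff n (compPS η γ * (PowerSeries.derivative ℂ γ) ^ 2) := by
  rw [PowerSeries.coeff_mul, PowerSeries.coeff_mul]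
  refine Finset.sum_congr rfl fun p hp => ?_
  rw [Finset.HasAntidiagonal.mem_antidiagonal] at hp
  have h1 : PowerSeries.coeff p.1 (compPS η β) = PowerSeries.coeff p.1 (compPS η γ) := by
    simp only [compPS, PowerSeries.coeff_mk]
    refine Finset.sum_congr rfl fun k _ => ?_
    rw [coeff_pow_congr k p.1 (fun i hi => h i (by omega))]
  have h2 : PowerSeries.coeff p.2 ((PowerSeries.derivative ℂ β) ^ 2) =
      PowerSeries.coeff p.2 ((PowerSeries.derivative ℂ γ) ^ 2) := by
    refine coeff_pow_congr 2 p.2 fun i hi => ?_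
    rw [PowerSeries.coeff_derivative, PowerSeries.coeff_derivative, h (i + 1) (by omega)]
  rw [h1, h2]

/-- The coefficients of the solution, constructed recursively. -/
noncomputable def bfun (η : PowerSeries ℂ) : ℕ → ℂ
  | 0 => 0
  | 1 => 1
  | (n + 2) =>
      (PowerSeries.coeff n
        (compPS η (PowerSeries.mk fun i => if _ : i < n + 2 then bfun η i else 0) *
          (PowerSeries.derivative ℂ
            (PowerSeries.mk fun i => if _ : i < n + 2 then bfun η i else 0)) ^ 2)) /
        (((n : ℂ) + 1) * ((n : ℂ) + 2))
  termination_by n => n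

lemma coeff_F_eq (η : PowerSeries ℂ) (n : ℕ) (γ : PowerSeries ℂ)
    (h : ∀ i ≤ n + 1, PowerSeries.coeff i γ = bfun η i) :
    PowerSeries.coeff n (compPS η γ * (PowerSeries.derivative ℂ γ) ^ 2) =
      ((n : ℂ) + 1) * ((n : ℂ) + 2) * bfun η (n + 2) := by
  have hc : ∀ i ≤ n + 1, PowerSeries.coeff i γ =
      PowerSeries.coeff i (PowerSeries.mk fun i => if _ : i < n + 2 then bfun η i else 0) := by
    intro i hi
    rw [PowerSeries.coeff_mk, dif_pos (by omega), h i hi]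
  rw [coeff_F_congr η n hc, bfun]
  have hne : ((n : ℂ) + 1) * ((n : ℂ) + 2) ≠ 0 := by
    have h1 : ((n : ℂ) + 1) ≠ 0 := Nat.cast_add_one_ne_zero n
    have h2 : ((n : ℂ) + 2) ≠ 0 := fun hh =>
      Nat.cast_add_one_ne_zero (R := ℂ) (n + 1) (by push_cast; linear_combination hh)
    exact mul_ne_zero h1 h2
  field_simp
  exact (mul_div_cancel_right₀ _ (right_ne_zero_of_mul hne)).symm

/-- For any `η ∈ ℂ[[q]]` there is a unique `β ∈ q + q²ℂ[[q]]` such that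
`η(β(q)) β'(q) - β''(q)/β'(q) = 0`. -/
theorem stmt14 (η : PowerSeries ℂ) :
    ∃! β : PowerSeries ℂ,
      (PowerSeries.constantCoeff β = 0 ∧ PowerSeries.coeff 1 β = 1) ∧
      compPS η β * PowerSeries.derivative ℂ β -
        PowerSeries.derivative ℂ (PowerSeries.derivative ℂ β) *
          (PowerSeries.derivative ℂ β)⁻¹ = 0 := by
  set B : PowerSeries ℂ := PowerSeries.mk (bfun η) with hB
  have hB0 : PowerSeries.constantCoeff B = 0 := by
    rw [← PowerSeries.coeff_zero_eq_constantCoeff_apply, hB, PowerSeries.coeff_mk, bfun]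
  have hB1 : PowerSeries.coeff 1 B = 1 := by rw [hB, PowerSeries.coeff_mk, bfun]
  -- second derivative coefficient formula
  have hdd : ∀ (γ : PowerSeries ℂ) (n : ℕ),
      PowerSeries.coeff n (PowerSeries.derivative ℂ (PowerSeries.derivative ℂ γ)) =
        ((n : ℂ) + 1) * ((n : ℂ) + 2) * PowerSeries.coeff (n + 2) γ := by
    intro γ n
    rw [PowerSeries.coeff_derivative, PowerSeries.coeff_derivative]
    push_cast
    ring
  -- F γ = γ'' whenever coefficients are bfun
  have hFeq : ∀ γ : PowerSeries ℂ, (∀ i, PowerSeries.coeff i γ = bfun η i) →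
      compPS η γ * (PowerSeries.derivative ℂ γ) ^ 2 =
        PowerSeries.derivative ℂ (PowerSeries.derivative ℂ γ) := by
    intro γ hγ
    ext n
    rw [hdd, coeff_F_eq η n γ (fun i _ => hγ i), hγ (n + 2)]
  -- invertibility of derivative when coeff 1 = 1
  have hunit : ∀ γ : PowerSeries ℂ, PowerSeries.coeff 1 γ = 1 →
      (PowerSeries.derivative ℂ γ)⁻¹ * PowerSeries.derivative ℂ γ = 1 := by
    intro γ hγ1
    refine PowerSeries.inv_mul_cancel _ ?_
    rw [← PowerSeries.coeff_zero_eq_constantCoeff_apply, PowerSeries.coeff_derivative, hγ1]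
    simp
  -- the equation holds iff F γ = γ''
  have hmain : ∀ γ : PowerSeries ℂ, PowerSeries.coeff 1 γ = 1 →
      (compPS η γ * PowerSeries.derivative ℂ γ -
        PowerSeries.derivative ℂ (PowerSeries.derivative ℂ γ) *
          (PowerSeries.derivative ℂ γ)⁻¹ = 0 ↔
      compPS η γ * (PowerSeries.derivative ℂ γ) ^ 2 =
        PowerSeries.derivative ℂ (PowerSeries.derivative ℂ γ)) := by
    intro γ hγ1
    have hu := hunit γ hγ1
    constructor
    · intro h
      rw [sub_eq_zero] at h
      calc compPS η γ * (PowerSeries.derivative ℂ γ) ^ 2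
          = compPS η γ * PowerSeries.derivative ℂ γ * PowerSeries.derivative ℂ γ := by ring
        _ = PowerSeries.derivative ℂ (PowerSeries.derivative ℂ γ) *
            (PowerSeries.derivative ℂ γ)⁻¹ * PowerSeries.derivative ℂ γ := by rw [h]
        _ = PowerSeries.derivative ℂ (PowerSeries.derivative ℂ γ) *
            ((PowerSeries.derivative ℂ γ)⁻¹ * PowerSeries.derivative ℂ γ) := by ring
        _ = PowerSeries.derivative ℂ (PowerSeries.derivative ℂ γ) := by rw [hu, mul_one]
    · intro h
      rw [sub_eq_zero, ← h]
      exact (calc compPS η γ * (PowerSeries.derivative ℂ γ) ^ 2 * (PowerSeries.derivative ℂ γ)⁻¹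
          = compPS η γ * PowerSeries.derivative ℂ γ *
            ((PowerSeries.derivative ℂ γ)⁻¹ * PowerSeries.derivative ℂ γ) := by ring
        _ = compPS η γ * PowerSeries.derivative ℂ γ := by rw [hu, mul_one]).symm
  refine ⟨B, ⟨⟨hB0, hB1⟩, ?_⟩, ?_⟩
  · rw [hmain B hB1]
    exact hFeq B (fun i => by rw [hB, PowerSeries.coeff_mk])
  · rintro γ ⟨⟨hγ0, hγ1⟩, heq⟩
    rw [hmain γ hγ1] at heq
    have key : ∀ i, PowerSeries.coeff i γ = bfun η i := by
      intro i
      induction i using Nat.strong_induction_on with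
      | _ i ih =>
        match i with
        | 0 => rw [← PowerSeries.coeff_zero_eq_constantCoeff_apply] at hγ0
               rw [hγ0, bfun]
        | 1 => rw [hγ1, bfun]
        | (n + 2) =>
          have h1 := coeff_F_eq η n γ (fun j hj => ih j (by omega))
          have h2 : PowerSeries.coeff n (compPS η γ * (PowerSeries.derivative ℂ γ) ^ 2) =
              ((n : ℂ) + 1) * ((n : ℂ) + 2) * PowerSeries.coeff (n + 2) γ := by
            rw [heq, hdd]
          have hne : ((n : ℂ) + 1) * ((n : ℂ) + 2) ≠ 0 := by
            have h3 : ((n : ℂ) + 1) ≠ 0 := Nat.cast_add_one_ne_zero n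
            have h4 : ((n : ℂ) + 2) ≠ 0 := fun hh =>
              Nat.cast_add_one_ne_zero (R := ℂ) (n + 1) (by push_cast; linear_combination hh)
            exact mul_ne_zero h3 h4
          exact mul_left_cancel₀ hne (h2.symm.trans h1)
    ext n
    rw [key n, hB, PowerSeries.coeff_mk]
end

section
/- Consider the lattice ℤ^{10} with form diag(1,-1,…,-1), basis L, A₀,…,A₈, and K = 3L - Σᵢ Aᵢ. The sublattice Λ₀ = {X : K·X = 0 and A₀·X = 0} is a rank-8 lattice on which the bilinear form is even and negative definite. -/
/-- The intersection form `diag(1,-1,…,-1)` on `ℤ^{10}` with basis `L, A₀, …, A₈`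
(index `0` corresponds to `L`, index `i+1` to `Aᵢ`). -/
def interForm (x y : Fin 10 → ℤ) : ℤ :=
  ∑ i : Fin 10, (if i = 0 then (1 : ℤ) else -1) * x i * y i

/-- `K = 3L - A₀ - ⋯ - A₈`. -/
def Kvec : Fin 10 → ℤ := fun i => if i = 0 then 3 else -1

/-- `A₀` in coordinates. -/
def A0vec : Fin 10 → ℤ := fun i => if i = 1 then 1 else 0

lemma interForm_add (v x y : Fin 10 → ℤ) :
    interForm v (x + y) = interForm v x + interForm v y := by
  simp [interForm, mul_add, Finset.sum_add_distrib]

lemma interForm_smul (v : Fin 10 → ℤ) (c : ℤ) (x : Fin 10 → ℤ) :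
    interForm v (c • x) = c * interForm v x := by
  simp only [interForm, Pi.smul_apply, smul_eq_mul, Finset.mul_sum]
  exact Finset.sum_congr rfl fun i _ => by ring

/-- The sublattice `Λ₀ = {X : K·X = 0 and A₀·X = 0}`. -/
def Lambda0 : Submodule ℤ (Fin 10 → ℤ) where
  carrier := {x | interForm Kvec x = 0 ∧ interForm A0vec x = 0}
  zero_mem' := by constructor <;> simp [interForm]
  add_mem' := by
    rintro a b ⟨h1, h2⟩ ⟨h3, h4⟩
    exact ⟨by rw [interForm_add, h1, h3, add_zero],
      by rw [interForm_add, h2, h4, add_zero]⟩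
  smul_mem' := by
    rintro c a ⟨h1, h2⟩
    exact ⟨by rw [interForm_smul, h1, mul_zero],
      by rw [interForm_smul, h2, mul_zero]⟩

lemma sum_univ_nine' (f : Fin 9 → ℤ) :
    ∑ i, f i = f 0 + f 1 + f 2 + f 3 + f 4 + f 5 + f 6 + f 7 + f 8 := by
  rw [Fin.sum_univ_castSucc, Fin.sum_univ_eight]; rfl

lemma sum_univ_ten' (f : Fin 10 → ℤ) :
    ∑ i, f i = f 0 + f 1 + f 2 + f 3 + f 4 + f 5 + f 6 + f 7 + f 8 + f 9 := by
  rw [Fin.sum_univ_castSucc, sum_univ_nine']; rfl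

lemma interK (x : Fin 10 → ℤ) : interForm Kvec x =
    3 * x 0 + x 1 + x 2 + x 3 + x 4 + x 5 + x 6 + x 7 + x 8 + x 9 := by
  rw [interForm, sum_univ_ten']; simp +decide [Kvec]

lemma interA (x : Fin 10 → ℤ) : interForm A0vec x = -x 1 := by
  rw [interForm, sum_univ_ten']; simp +decide [A0vec]

lemma interSelf (x : Fin 10 → ℤ) : interForm x x =
    x 0 * x 0 - x 1 * x 1 - x 2 * x 2 - x 3 * x 3 - x 4 * x 4 - x 5 * x 5
      - x 6 * x 6 - x 7 * x 7 - x 8 * x 8 - x 9 * x 9 := by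
  rw [interForm, sum_univ_ten']; simp +decide; ring

lemma neg_part (x0 x2 x3 x4 x5 x6 x7 x8 x9 : ℤ)
    (hK : 3 * x0 + x2 + x3 + x4 + x5 + x6 + x7 + x8 + x9 = 0)
    (hnz : ¬ (x0 = 0 ∧ x2 = 0 ∧ x3 = 0 ∧ x4 = 0 ∧ x5 = 0 ∧ x6 = 0 ∧ x7 = 0 ∧ x8 = 0 ∧ x9 = 0)) :
    x0 * x0 - x2 * x2 - x3 * x3 - x4 * x4 - x5 * x5 - x6 * x6 - x7 * x7 - x8 * x8 - x9 * x9 < 0 := by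
  set S := x2 * x2 + x3 * x3 + x4 * x4 + x5 * x5 + x6 * x6 + x7 * x7 + x8 * x8 + x9 * x9 with hS
  have key : 8 * S = 9 * (x0 * x0) +
      ((x2 - x3)^2 + (x2 - x4)^2 + (x2 - x5)^2 + (x2 - x6)^2 + (x2 - x7)^2 + (x2 - x8)^2 + (x2 - x9)^2 + (x3 - x4)^2 + (x3 - x5)^2 + (x3 - x6)^2 + (x3 - x7)^2 + (x3 - x8)^2 + (x3 - x9)^2 + (x4 - x5)^2 + (x4 - x6)^2 + (x4 - x7)^2 + (x4 - x8)^2 + (x4 - x9)^2 + (x5 - x6)^2 + (x5 - x7)^2 + (x5 - x8)^2 + (x5 - x9)^2 + (x6 - x7)^2 + (x6 - x8)^2 + (x6 - x9)^2 + (x7 - x8)^2 + (x7 - x9)^2 + (x8 - x9)^2) := by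
    linear_combination (x2 + x3 + x4 + x5 + x6 + x7 + x8 + x9 - 3 * x0) * hK
  have cs : 9 * (x0 * x0) ≤ 8 * S := by
    linarith [key, sq_nonneg (x2 - x3), sq_nonneg (x2 - x4), sq_nonneg (x2 - x5), sq_nonneg (x2 - x6), sq_nonneg (x2 - x7), sq_nonneg (x2 - x8), sq_nonneg (x2 - x9), sq_nonneg (x3 - x4), sq_nonneg (x3 - x5), sq_nonneg (x3 - x6), sq_nonneg (x3 - x7), sq_nonneg (x3 - x8), sq_nonneg (x3 - x9), sq_nonneg (x4 - x5), sq_nonneg (x4 - x6), sq_nonneg (x4 - x7), sq_nonneg (x4 - x8), sq_nonneg (x4 - x9), sq_nonneg (x5 - x6), sq_nonneg (x5 - x7), sq_nonneg (x5 - x8), sq_nonneg (x5 - x9), sq_nonneg (x6 - x7), sq_nonneg (x6 - x8), sq_nonneg (x6 - x9), sq_nonneg (x7 - x8), sq_nonneg (x7 - x9), sq_nonneg (x8 - x9)]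
  by_contra hge
  push_neg at hge
  have h0sq : x0 * x0 ≤ 0 := by linarith
  have h0 : x0 = 0 := mul_self_eq_zero.mp (le_antisymm h0sq (mul_self_nonneg x0))
  have hSle : S ≤ 0 := by rw [h0] at hge; linarith
  have n2 := mul_self_nonneg x2
  have n3 := mul_self_nonneg x3
  have n4 := mul_self_nonneg x4
  have n5 := mul_self_nonneg x5
  have n6 := mul_self_nonneg x6
  have n7 := mul_self_nonneg x7
  have n8 := mul_self_nonneg x8
  have n9 := mul_self_nonneg x9
  exact hnz ⟨h0, mul_self_eq_zero.mp (le_antisymm (by linarith) n2),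
    mul_self_eq_zero.mp (le_antisymm (by linarith) n3),
    mul_self_eq_zero.mp (le_antisymm (by linarith) n4),
    mul_self_eq_zero.mp (le_antisymm (by linarith) n5),
    mul_self_eq_zero.mp (le_antisymm (by linarith) n6),
    mul_self_eq_zero.mp (le_antisymm (by linarith) n7),
    mul_self_eq_zero.mp (le_antisymm (by linarith) n8),
    mul_self_eq_zero.mp (le_antisymm (by linarith) n9)⟩

def gmap (c : Fin 8 → ℤ) : Fin 10 → ℤ :=
  ![c 0, 0, c 1, c 2, c 3, c 4, c 5, c 6, c 7,
    -(3 * c 0) - c 1 - c 2 - c 3 - c 4 - c 5 - c 6 - c 7]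

lemma gmap_mem (c : Fin 8 → ℤ) : gmap c ∈ Lambda0 := by
  constructor
  · rw [interK]
    show 3 * c 0 + 0 + c 1 + c 2 + c 3 + c 4 + c 5 + c 6 + c 7 +
      (-(3 * c 0) - c 1 - c 2 - c 3 - c 4 - c 5 - c 6 - c 7) = 0
    ring
  · rw [interA]
    show -(0 : ℤ) = 0
    ring

def lamEquiv : Lambda0 ≃ₗ[ℤ] (Fin 8 → ℤ) where
  toFun x := ![x.1 0, x.1 2, x.1 3, x.1 4, x.1 5, x.1 6, x.1 7, x.1 8]
  invFun c := ⟨gmap c, gmap_mem c⟩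
  map_add' x y := by funext j; fin_cases j <;> rfl
  map_smul' c x := by funext j; fin_cases j <;> rfl
  left_inv := by
    rintro ⟨x, hK, hA⟩
    rw [interK] at hK; rw [interA] at hA
    ext i
    fin_cases i
    · rfl
    · show (0 : ℤ) = x 1
      linarith
    · rfl
    · rfl
    · rfl
    · rfl
    · rfl
    · rfl
    · rfl
    · show -(3 * x 0) - x 2 - x 3 - x 4 - x 5 - x 6 - x 7 - x 8 = x 9
      linarith
  right_inv c := by
    funext j
    fin_cases j <;> rfl

/-- `Λ₀` is a rank-8 lattice on which the intersection form is even and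
negative definite. -/
theorem stmt18 :
    Nonempty (Module.Basis (Fin 8) ℤ Lambda0) ∧
    (∀ x : Fin 10 → ℤ, x ∈ Lambda0 → 2 ∣ interForm x x) ∧
    (∀ x : Fin 10 → ℤ, x ∈ Lambda0 → x ≠ 0 → interForm x x < 0) := by
  refine ⟨⟨Module.Basis.ofEquivFun lamEquiv⟩, ?_, ?_⟩
  · rintro x ⟨hK, hA⟩
    rw [interK] at hK; rw [interA] at hA
    have sq : ∀ n : ℤ, ∃ k, n * n = n + 2 * k := by
      intro n
      rcases Int.even_or_odd n with ⟨k, hk⟩ | ⟨k, hk⟩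
      · exact ⟨2 * k * k - k, by subst hk; ring⟩
      · exact ⟨2 * k * k + k, by subst hk; ring⟩
    obtain ⟨k0, h0⟩ := sq (x 0); obtain ⟨k1, h1⟩ := sq (x 1)
    obtain ⟨k2, h2⟩ := sq (x 2); obtain ⟨k3, h3⟩ := sq (x 3)
    obtain ⟨k4, h4⟩ := sq (x 4); obtain ⟨k5, h5⟩ := sq (x 5)
    obtain ⟨k6, h6⟩ := sq (x 6); obtain ⟨k7, h7⟩ := sq (x 7)
    obtain ⟨k8, h8⟩ := sq (x 8); obtain ⟨k9, h9⟩ := sq (x 9)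
    refine ⟨2 * x 0 + k0 - k1 - k2 - k3 - k4 - k5 - k6 - k7 - k8 - k9, ?_⟩
    rw [interSelf]
    linear_combination h0 - h1 - h2 - h3 - h4 - h5 - h6 - h7 - h8 - h9 - hK
  · rintro x ⟨hK, hA⟩ hx
    rw [interK] at hK; rw [interA] at hA
    rw [interSelf]
    have h1 : x 1 = 0 := by linarith
    have hK' : 3 * x 0 + x 2 + x 3 + x 4 + x 5 + x 6 + x 7 + x 8 + x 9 = 0 := by linarith
    have hnz : ¬ (x 0 = 0 ∧ x 2 = 0 ∧ x 3 = 0 ∧ x 4 = 0 ∧ x 5 = 0 ∧ x 6 = 0 ∧ x 7 = 0 ∧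
        x 8 = 0 ∧ x 9 = 0) := by
      rintro ⟨z0, z2, z3, z4, z5, z6, z7, z8, z9⟩
      apply hx
      funext i
      fin_cases i <;> assumption
    have := neg_part (x 0) (x 2) (x 3) (x 4) (x 5) (x 6) (x 7) (x 8) (x 9) hK' hnz
    rw [h1]
    linarith
end
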